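/- Fix integers 1 ≤ C < F. Then the cache hit ratio, viewed as a function of the Zipf exponent, γ ↦ (Σ_{f=1}^{C} f^{-γ}) / (Σ_{g=1}^{F} g^{-γ}), is strictly increasing on (0, ∞). (A higher Zipf exponent makes the popularity distribution more peaked, so caching the C most popular files captures a strictly larger fraction of requests.) -/

import Mathlib

open Finset

lemma cache_aux_term (x y : ℝ) (hxy : x < y) {f g : ℕ} (hf : 1 ≤ f) (hfg : f < g) :
    (g : ℝ) ^ (-y) * (f : ℝ) ^ (-x) < (g : ℝ) ^ (-x) * (f : ℝ) ^ (-y) := by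
  have hf0 : (0 : ℝ) < f := by exact_mod_cast hf
  have hfg' : (f : ℝ) < g := by exact_mod_cast hfg
  have hg0 : (0 : ℝ) < g := hf0.trans hfg'
  have key : (g : ℝ) ^ (x - y) < (f : ℝ) ^ (x - y) :=
    Real.rpow_lt_rpow_of_neg hf0 hfg' (by linarith)
  have e1 : (g : ℝ) ^ (-y) = (g : ℝ) ^ (x - y) * (g : ℝ) ^ (-x) := by
    rw [← Real.rpow_add hg0]; ring_nf
  have e2 : (f : ℝ) ^ (-y) = (f : ℝ) ^ (x - y) * (f : ℝ) ^ (-x) := by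
    rw [← Real.rpow_add hf0]; ring_nf
  have hpos : (0 : ℝ) < (g : ℝ) ^ (-x) * (f : ℝ) ^ (-x) := by positivity
  calc (g : ℝ) ^ (-y) * (f : ℝ) ^ (-x)
      = (g : ℝ) ^ (x - y) * ((g : ℝ) ^ (-x) * (f : ℝ) ^ (-x)) := by rw [e1]; ring
    _ < (f : ℝ) ^ (x - y) * ((g : ℝ) ^ (-x) * (f : ℝ) ^ (-x)) :=
        mul_lt_mul_of_pos_right key hpos
    _ = (g : ℝ) ^ (-x) * (f : ℝ) ^ (-y) := by rw [e2]; ring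

/-- For fixed `1 ≤ C < F`, the cache hit ratio
`γ ↦ (Σ_{f=1}^{C} f^{-γ}) / (Σ_{g=1}^{F} g^{-γ})`
is strictly increasing in the Zipf exponent `γ` on `(0, ∞)`. -/
theorem cache_hit_ratio_strict_mono_in_zipf_exponent
    (C F : ℕ) (hC : 1 ≤ C) (hCF : C < F) :
    StrictMonoOn
      (fun γ : ℝ =>
        (∑ f ∈ Finset.Icc 1 C, (f : ℝ) ^ (-γ)) /
        (∑ g ∈ Finset.Icc 1 F, (g : ℝ) ^ (-γ)))
      (Set.Ioi (0 : ℝ)) := by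
  intro x hx y hy hxy
  simp only
  -- split the big sum
  have hsplit : ∀ z : ℝ, ∑ g ∈ Finset.Icc 1 F, (g : ℝ) ^ (-z) =
      (∑ f ∈ Finset.Icc 1 C, (f : ℝ) ^ (-z)) + ∑ g ∈ Finset.Ioc C F, (g : ℝ) ^ (-z) := by
    intro z
    rw [show Finset.Icc 1 F = Finset.Ioc 0 F from (Finset.Icc_add_one_left_eq_Ioc 0 F),
      ← Finset.sum_Ioc_consecutive _ (Nat.zero_le C) hCF.le,
      show Finset.Ioc 0 C = Finset.Icc 1 C from (Finset.Icc_add_one_left_eq_Ioc 0 C).symm]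
  have hposA : ∀ z : ℝ, (0 : ℝ) < ∑ f ∈ Finset.Icc 1 C, (f : ℝ) ^ (-z) := by
    intro z
    apply Finset.sum_pos
    · intro i hi
      have : 1 ≤ i := (Finset.mem_Icc.mp hi).1
      have : (0 : ℝ) < i := by exact_mod_cast this
      positivity
    · exact ⟨1, Finset.mem_Icc.mpr ⟨le_rfl, hC⟩⟩
  have hposB : ∀ z : ℝ, (0 : ℝ) < ∑ g ∈ Finset.Ioc C F, (g : ℝ) ^ (-z) := by
    intro z
    apply Finset.sum_pos
    · intro i hi
      have h1 : C < i := (Finset.mem_Ioc.mp hi).1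
      have : (0 : ℝ) < i := by exact_mod_cast lt_of_le_of_lt (Nat.zero_le C) h1
      positivity
    · exact ⟨C + 1, Finset.mem_Ioc.mpr ⟨Nat.lt_succ_self C, hCF⟩⟩
  set a1 := ∑ f ∈ Finset.Icc 1 C, (f : ℝ) ^ (-x) with ha1
  set a2 := ∑ f ∈ Finset.Icc 1 C, (f : ℝ) ^ (-y) with ha2
  set b1 := ∑ g ∈ Finset.Ioc C F, (g : ℝ) ^ (-x) with hb1
  set b2 := ∑ g ∈ Finset.Ioc C F, (g : ℝ) ^ (-y) with hb2
  have hA1 := hposA x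
  have hA2 := hposA y
  have hB1 := hposB x
  have hB2 := hposB y
  rw [hsplit x, hsplit y]
  -- key cross inequality: b2 * a1 < b1 * a2
  have hcross : b2 * a1 < b1 * a2 := by
    rw [hb2, hb1, ha1, ha2, Finset.sum_mul_sum, Finset.sum_mul_sum]
    apply Finset.sum_lt_sum_of_nonempty ⟨C + 1, Finset.mem_Ioc.mpr ⟨Nat.lt_succ_self C, hCF⟩⟩
    intro g hg
    apply Finset.sum_lt_sum_of_nonempty ⟨1, Finset.mem_Icc.mpr ⟨le_rfl, hC⟩⟩
    intro f hf
    exact cache_aux_term x y hxy (Finset.mem_Icc.mp hf).1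
      (lt_of_le_of_lt (Finset.mem_Icc.mp hf).2 (Finset.mem_Ioc.mp hg).1)
  rw [div_lt_div_iff₀ (by linarith) (by linarith)]
  nlinarith [hcross]
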